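/- Let n ≥ 5 and let λ = (λ_1 ≥ … ≥ λ_n) be either a nonzero integer partition of length n or a half-partition of length n (all entries in ℕ + 1/2). Then ∑_{i=1}^n (λ_i² + (2n+1−2i)·λ_i) ≥ 2n, with equality if and only if λ = (1,0,…,0). (Equivalently, for the group SO(2n+1,ℝ), the quantity B_n(λ) = (1/(2n+1))·∑_{i=1}^n (λ_i² + (2n+1−2i)λ_i) over nontrivial dominant weights is minimized, with value 2n/(2n+1), exactly at the geometric representation.) -/

import Mathlib

/-- For `n ≥ 5` and `λ` either a nonzero integer partition of length `n` or a half-partition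
of length `n`, one has `∑_{i=1}^n (λ_i² + (2n+1-2i)·λ_i) ≥ 2n`, with equality iff
`λ = (1,0,…,0)`. -/
theorem statement2 (n : ℕ) (hn : 5 ≤ n) (lam : Fin n → ℝ) (hanti : Antitone lam)
    (hlam : ((∀ i, ∃ m : ℕ, lam i = m) ∧ lam ≠ 0) ∨
      (∀ i, ∃ m : ℕ, lam i = (m : ℝ) + 1 / 2)) :
    (2 * (n : ℝ) ≤
      ∑ i : Fin n, (lam i ^ 2 + (2 * (n : ℝ) + 1 - 2 * (((i : ℕ) : ℝ) + 1)) * lam i)) ∧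
    ((∑ i : Fin n, (lam i ^ 2 + (2 * (n : ℝ) + 1 - 2 * (((i : ℕ) : ℝ) + 1)) * lam i) =
        2 * (n : ℝ)) ↔
      lam = fun i : Fin n => if (i : ℕ) = 0 then 1 else 0) := by
  have hn0 : 0 < n := by omega
  have hnR : (5 : ℝ) ≤ (n : ℝ) := by exact_mod_cast hn
  set i0 : Fin n := ⟨0, hn0⟩ with hi0
  set c : Fin n → ℝ := fun i => 2 * (n : ℝ) + 1 - 2 * (((i : ℕ) : ℝ) + 1) with hc
  have hc1 : ∀ i : Fin n, 1 ≤ c i := by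
    intro i
    have h1 : (i : ℕ) + 1 ≤ n := i.isLt
    have h2 : ((i : ℕ) : ℝ) + 1 ≤ (n : ℝ) := by exact_mod_cast h1
    simp only [hc]
    linarith
  have hc0 : c i0 = 2 * (n : ℝ) - 1 := by simp [hc, hi0]; ring
  clear_value c
  have hgoalrw : (∑ i : Fin n, (lam i ^ 2 + (2 * (n : ℝ) + 1 - 2 * (((i : ℕ) : ℝ) + 1)) * lam i))
      = ∑ i : Fin n, (lam i ^ 2 + c i * lam i) :=
    Finset.sum_congr rfl (fun i _ => by rw [hc])
  rw [hgoalrw]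
  have hpos : ∀ i, 0 ≤ lam i := by
    intro i
    rcases hlam with ⟨h1, _⟩ | h2
    · obtain ⟨m, hm⟩ := h1 i; rw [hm]; positivity
    · obtain ⟨m, hm⟩ := h2 i; rw [hm]; positivity
  have hterm_nonneg : ∀ i : Fin n, 0 ≤ lam i ^ 2 + c i * lam i := by
    intro i
    nlinarith [hpos i, hc1 i]
  rcases hlam with ⟨hint, hne⟩ | hhalf
  · -- integer case
    obtain ⟨j, hj⟩ : ∃ j, lam j ≠ 0 := Function.ne_iff.mp hne
    have hj1 : 1 ≤ lam j := by
      obtain ⟨m, hm⟩ := hint j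
      rw [hm] at hj ⊢
      have hm0 : m ≠ 0 := by exact_mod_cast hj
      exact_mod_cast Nat.one_le_iff_ne_zero.mpr hm0
    have h0 : 1 ≤ lam i0 := le_trans hj1 (hanti (Fin.le_def.mpr (Nat.zero_le _)))
    have hg0 : 2 * (n : ℝ) ≤ lam i0 ^ 2 + c i0 * lam i0 := by
      rw [hc0]; nlinarith [h0]
    have hsingle : lam i0 ^ 2 + c i0 * lam i0 ≤
        ∑ i : Fin n, (lam i ^ 2 + c i * lam i) :=
      Finset.single_le_sum (fun i _ => hterm_nonneg i) (Finset.mem_univ i0)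
    refine ⟨le_trans hg0 hsingle, ?_, ?_⟩
    · intro heq
      have hg0eq : lam i0 ^ 2 + c i0 * lam i0 = 2 * (n : ℝ) :=
        le_antisymm (heq ▸ hsingle) hg0
      have hlam0 : lam i0 = 1 := by
        obtain ⟨m, hm⟩ := hint i0
        have hm1 : (1 : ℝ) ≤ (m : ℝ) := hm ▸ h0
        have hm1' : 1 ≤ m := by exact_mod_cast hm1
        by_contra hne1
        have hm2 : 2 ≤ m := by
          rcases Nat.lt_or_ge m 2 with h | h
          · interval_cases m
            · exact (hne1 (by rw [hm]; norm_num)).elim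
          · exact h
        have hm2' : (2 : ℝ) ≤ (m : ℝ) := by exact_mod_cast hm2
        rw [hm, hc0] at hg0eq
        nlinarith [hnR]
      have hrest : ∀ i : Fin n, i ≠ i0 → lam i = 0 := by
        intro i hi
        have hsumerase : ∑ x ∈ Finset.univ.erase i0, (lam x ^ 2 + c x * lam x) = 0 := by
          have hkey := Finset.add_sum_erase Finset.univ
            (fun x => lam x ^ 2 + c x * lam x) (Finset.mem_univ i0)
          have heq' : ∑ i : Fin n, (lam i ^ 2 + c i * lam i) = 2 * (n : ℝ) := heq
          linarith [hkey, heq', hg0eq]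
        have hzero := (Finset.sum_eq_zero_iff_of_nonneg
          (fun x _ => hterm_nonneg x)).mp hsumerase i
          (Finset.mem_erase.mpr ⟨hi, Finset.mem_univ i⟩)
        by_contra hne0
        have hlt : 0 < lam i := lt_of_le_of_ne (hpos i) (Ne.symm hne0)
        nlinarith [hc1 i]
      funext i
      by_cases hi : (i : ℕ) = 0
      · have hii : i = i0 := Fin.ext hi
        simp [hi, hii, hlam0]
        rfl
      · have hii : i ≠ i0 := fun h => hi (by rw [h])
        simp [hi, hrest i hii]
    · intro heq
      subst heq
      have hstep : ∀ i : Fin n,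
          ((if (i : ℕ) = 0 then (1 : ℝ) else 0) ^ 2 +
            c i * (if (i : ℕ) = 0 then (1 : ℝ) else 0)) =
          if i = i0 then 2 * (n : ℝ) else 0 := by
        intro i
        by_cases hi : (i : ℕ) = 0
        · have hii : i = i0 := Fin.ext hi
          rw [hii]
          simp [hc0, show ((i0 : Fin n) : ℕ) = 0 from rfl]
          try ring
        · have hii : i ≠ i0 := fun h => hi (by rw [h])
          simp [hi, hii]
      simp only [hstep]
      simp [Finset.sum_ite_eq']
  · -- half-integer case
    have hhalf2 : ∀ i, (1 : ℝ) / 2 ≤ lam i := by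
      intro i
      obtain ⟨m, hm⟩ := hhalf i
      rw [hm]
      have : (0 : ℝ) ≤ (m : ℝ) := Nat.cast_nonneg m
      linarith
    have htermge : ∀ i : Fin n, 1 / 4 + c i / 2 ≤ lam i ^ 2 + c i * lam i := by
      intro i
      have h1 := hhalf2 i
      have h2 := hc1 i
      have h3 : (0 : ℝ) ≤ lam i - 1 / 2 := by linarith
      have h4 : (0 : ℝ) ≤ lam i + 1 / 2 + c i := by linarith
      nlinarith [mul_nonneg h3 h4]
    have hgauss : ∀ k : ℕ, ∑ i ∈ Finset.range k, (i : ℝ) = (k : ℝ) * ((k : ℝ) - 1) / 2 := by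
      intro k
      induction k with
      | zero => simp
      | succ k ih =>
        rw [Finset.sum_range_succ, ih]
        push_cast
        ring
    have hcsum : ∑ i : Fin n, c i = (n : ℝ) ^ 2 := by
      have h1 : ∀ i : Fin n, c i = (2 * (n : ℝ) - 1) - 2 * ((i : ℕ) : ℝ) := by
        intro i; simp only [hc]; ring
      rw [Finset.sum_congr rfl (fun i _ => h1 i), Finset.sum_sub_distrib,
        Finset.sum_const, Finset.card_univ, Fintype.card_fin, ← Finset.mul_sum,
        Fin.sum_univ_eq_sum_range (fun i : ℕ => (i : ℝ)), hgauss n]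
      push_cast [nsmul_eq_mul]
      ring
    have hsumge : (n : ℝ) / 4 + (n : ℝ) ^ 2 / 2 ≤
        ∑ i : Fin n, (lam i ^ 2 + c i * lam i) := by
      calc (n : ℝ) / 4 + (n : ℝ) ^ 2 / 2
          = ∑ i : Fin n, (1 / 4 + c i / 2) := by
            rw [Finset.sum_add_distrib, Finset.sum_const, Finset.card_univ, Fintype.card_fin]
            rw [show (∑ i : Fin n, c i / 2) = (∑ i : Fin n, c i) / 2 by
              rw [Finset.sum_div], hcsum]
            ring
        _ ≤ _ := Finset.sum_le_sum (fun i _ => htermge i)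
    have hgt : 2 * (n : ℝ) < ∑ i : Fin n, (lam i ^ 2 + c i * lam i) := by
      nlinarith [hnR]
    refine ⟨le_of_lt hgt, ?_, ?_⟩
    · intro heq; exact absurd heq (ne_of_gt hgt)
    · intro heq
      exfalso
      have h1 : lam i0 = 1 := by
        rw [heq]; simp [hi0]
      obtain ⟨m, hm⟩ := hhalf i0
      rw [hm] at h1
      have h2 : ((2 * m + 1 : ℕ) : ℝ) = ((2 : ℕ) : ℝ) := by push_cast; linarith
      have h3 : 2 * m + 1 = 2 := Nat.cast_injective h2
      omega
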